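/- Let β > 1 and let β_N < β be the unique real solution in (1,∞) of 1 = Σ_{j=1}^N ε*_j(β)/β_N^j, where N is such that ε*_N(β) ≥ 1. Then for any words (ε_1,…,ε_n) ∈ Σ_{β_N}^n and (ε'_1,…,ε'_m) ∈ Σ_{β_N}^m, the concatenation (ε_1,…,ε_n, 0^N, ε'_1,…,ε'_m) is β_N-admissible, where 0^N denotes N zeros. -/

import Mathlib

open MeasureTheory Filter Real Set

noncomputable section

/-- The β-transformation `x ↦ βx mod 1`. -/
def bT (β x : ℝ) : ℝ := Int.fract (β * x)

/-- The digit `ε_{j+1}(x, β) = ⌊β T_β^j x⌋` (0-indexed). -/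
def dig (β x : ℝ) (j : ℕ) : ℤ := ⌊β * (bT β)^[j] x⌋

/-- A finite word is admissible if it is the initial digit string of some `x ∈ [0,1)`. -/
def Adm (β : ℝ) (w : List ℤ) : Prop :=
  ∃ x ∈ Set.Ico (0:ℝ) 1, ∀ i : Fin w.length, dig β x i = w.get i

/-- The set `Σ_β^n` of admissible words of length `n`. -/
def SigmaB (β : ℝ) (n : ℕ) : Set (List ℤ) := {w | w.length = n ∧ Adm β w}

/-- The cylinder of a word. -/
def cyl (β : ℝ) (w : List ℤ) : Set ℝ :=
  {x | x ∈ Set.Ico (0:ℝ) 1 ∧ ∀ i : Fin w.length, dig β x i = w.get i}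

/-- The length of a cylinder. -/
def cylLen (β : ℝ) (w : List ℤ) : ℝ := (volume (cyl β w)).toReal

/-- A word/cylinder is full if the cylinder has maximal length `β^{-n}`. -/
def IsFull (β : ℝ) (w : List ℤ) : Prop := cylLen β w = (β ^ w.length)⁻¹

/-- The left endpoint `Σ_j ε_j β^{-j}` of the cylinder of a word. -/
def leftpt (β : ℝ) (w : List ℤ) : ℝ :=
  ∑ i : Fin w.length, (w.get i : ℝ) / β ^ ((i : ℕ) + 1)

/-- Birkhoff (ergodic) sum `S_n f(x)`. -/
def birk (β : ℝ) (f : ℝ → ℝ) (n : ℕ) (x : ℝ) : ℝ :=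
  ∑ j ∈ Finset.range n, f ((bT β)^[j] x)

/-- The digit sequence of `1`. -/
def eps1 (β : ℝ) (j : ℕ) : ℤ := ⌊β * (bT β)^[j] 1⌋

/-- The infinite β-expansion of `1`. -/
def epsStar (β : ℝ) : ℕ → ℤ := by
  classical
  exact
  if h : ∃ m, eps1 β m ≠ 0 ∧ ∀ k, m < k → eps1 β k = 0 then
    fun j =>
      if j % (h.choose + 1) = h.choose then eps1 β h.choose - 1
      else eps1 β (j % (h.choose + 1))
  else eps1 β

/-- Strict lexicographic order on integer sequences. -/
def lexLt (a b : ℕ → ℤ) : Prop := ∃ k, (∀ j, j < k → a j = b j) ∧ a k < b k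

/-- The partition function `Σ_{w ∈ Σ_β^n} sup_{y ∈ I_n(w)} e^{S_n g(y)}`. -/
def presSum (β : ℝ) (g : ℝ → ℝ) (n : ℕ) : ℝ :=
  ∑' w : SigmaB β n, ⨆ y ∈ cyl β (w : List ℤ), Real.exp (birk β g n y)

/-- The pressure function `P(g, T_β)`. -/
def pressure (β : ℝ) (g : ℝ → ℝ) : ℝ :=
  limUnder Filter.atTop fun n : ℕ => Real.log (presSum β g n) / n

end

noncomputable section Aux
variable {β γ x : ℝ}

lemma bT_mem (β x : ℝ) : bT β x ∈ Set.Ico (0:ℝ) 1 :=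
  ⟨Int.fract_nonneg _, Int.fract_lt_one _⟩

lemma bT_eq (β x : ℝ) : bT β x = β * x - ⌊β * x⌋ := rfl

lemma iter_mem (hx : x ∈ Set.Ico (0:ℝ) 1) (j : ℕ) : (bT β)^[j] x ∈ Set.Ico (0:ℝ) 1 := by
  cases j with
  | zero => exact hx
  | succ n => rw [Function.iterate_succ_apply']; exact bT_mem _ _

lemma iter_succ' (β x : ℝ) (j : ℕ) :
    (bT β)^[j+1] x = β * (bT β)^[j] x - dig β x j := by
  rw [Function.iterate_succ_apply', dig]; exact bT_eq _ _

lemma dig_nonneg (hβ : 0 ≤ β) (hx : x ∈ Set.Ico (0:ℝ) 1) (j : ℕ) : 0 ≤ dig β x j := by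
  have := iter_mem (β := β) hx j
  exact Int.floor_nonneg.mpr (mul_nonneg hβ this.1)

lemma dig_shift (β x : ℝ) (k j : ℕ) : dig β x (k + j) = dig β ((bT β)^[k] x) j := by
  unfold dig
  rw [← Function.iterate_add_apply, Nat.add_comm j k]

end Aux

noncomputable section Lex
variable {β : ℝ}

/-- Digit sequences are lexicographically monotone. -/
lemma digLex (hβ : 0 ≤ β) {x y : ℝ} (hxy : x ≤ y) :
    (∀ j, dig β x j = dig β y j) ∨
    ∃ i, (∀ j, j < i → dig β x j = dig β y j) ∧ dig β x i < dig β y i := by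
  by_cases heq : ∀ j, dig β x j = dig β y j
  · exact Or.inl heq
  · right
    push_neg at heq
    have hex : ∃ j, dig β x j ≠ dig β y j := heq
    classical
    refine ⟨Nat.find hex, fun j hj => by
      have := Nat.find_min hex hj; simpa using this, ?_⟩
    have hpre : ∀ j, j ≤ Nat.find hex → (bT β)^[j] x ≤ (bT β)^[j] y := by
      intro j
      induction j with
      | zero => intro _; exact hxy
      | succ n ih =>
        intro hn
        have h1 : n < Nat.find hex := hn
        have hd : dig β x n = dig β y n := by
          have := Nat.find_min hex h1; simpa using this
        rw [iter_succ', iter_succ', hd]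
        have := ih (le_of_lt h1)
        have := mul_le_mul_of_nonneg_left this hβ
        linarith
    have hle : dig β x (Nat.find hex) ≤ dig β y (Nat.find hex) := by
      unfold dig
      exact Int.floor_le_floor (mul_le_mul_of_nonneg_left (hpre _ le_rfl) hβ)
    exact lt_of_le_of_ne hle (Nat.find_spec hex)

lemma eps1_eq_dig (β : ℝ) (j : ℕ) : eps1 β j = dig β 1 j := rfl

lemma eps1_nonneg (hβ : 1 < β) (j : ℕ) : 0 ≤ eps1 β j := by
  cases j with
  | zero =>
    show (0:ℤ) ≤ ⌊β * (1:ℝ)⌋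
    rw [mul_one]
    exact Int.floor_nonneg.mpr (by linarith)
  | succ n =>
    show (0:ℤ) ≤ ⌊β * (bT β)^[n+1] 1⌋
    rw [Function.iterate_succ_apply']
    exact Int.floor_nonneg.mpr (mul_nonneg (by linarith) (bT_mem β _).1)

/-- Lex property of the greedy digit sequence of 1. -/
lemma eps1_lex (hβ : 1 < β) (k : ℕ) :
    (∀ j, eps1 β (k + j) = eps1 β j) ∨
    ∃ i, (∀ j, j < i → eps1 β (k + j) = eps1 β j) ∧ eps1 β (k + i) < eps1 β i := by
  rcases Nat.eq_zero_or_pos k with rfl | hk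
  · exact Or.inl fun j => by rw [Nat.zero_add]
  · have hx : (bT β)^[k] 1 ≤ 1 := by
      obtain ⟨k', rfl⟩ := Nat.exists_eq_add_of_lt hk
      rw [Nat.zero_add, Function.iterate_succ_apply']
      exact le_of_lt (bT_mem β _).2
    have := digLex (le_of_lt (lt_trans zero_lt_one hβ)) hx
    simp only [← dig_shift, ← eps1_eq_dig] at this
    exact this
end Lex

noncomputable section Star
variable {β : ℝ}

lemma epsStar_spec (β : ℝ) :
    (∃ c, (eps1 β c ≠ 0 ∧ ∀ k, c < k → eps1 β k = 0) ∧
      ∀ j, epsStar β j = if j % (c+1) = c then eps1 β c - 1 else eps1 β (j % (c+1))) ∨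
    (∀ j, epsStar β j = eps1 β j) := by
  by_cases h : ∃ m, eps1 β m ≠ 0 ∧ ∀ k, m < k → eps1 β k = 0
  · left
    exact ⟨h.choose, h.choose_spec, fun j => by simp only [epsStar, dif_pos h]⟩
  · right
    exact fun j => by simp only [epsStar, dif_neg h]

lemma epsStar_nonneg (hβ : 1 < β) (j : ℕ) : 0 ≤ epsStar β j := by
  rcases epsStar_spec β with ⟨c, ⟨hc0, _⟩, hval⟩ | hval
  · rw [hval]
    split
    · have := eps1_nonneg hβ c
      omega
    · exact eps1_nonneg hβ _
  · rw [hval]; exact eps1_nonneg hβ _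

/-- Lex property of the quasi-greedy digit sequence of 1. -/
lemma epsStar_lex (hβ : 1 < β) (k : ℕ) :
    (∀ j, epsStar β (k + j) = epsStar β j) ∨
    ∃ i, (∀ j, j < i → epsStar β (k + j) = epsStar β j) ∧ epsStar β (k + i) < epsStar β i := by
  rcases epsStar_spec β with ⟨c, ⟨hc0, hctail⟩, hval⟩ | hval
  · -- periodic case, period p = c+1
    set p := c + 1 with hp
    have hper : ∀ a b : ℕ, a % p = b % p → epsStar β a = epsStar β b := by
      intro a b hab
      rw [hval, hval, hab]
    set r := k % p with hr
    have hrlt : r < p := Nat.mod_lt _ (Nat.succ_pos c)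
    have hkr : ∀ j : ℕ, (k + j) % p = (r + j) % p := by
      intro j
      rw [Nat.add_mod, Nat.add_mod r j, ← hr, Nat.mod_eq_of_lt hrlt]
    have hstar_lt : ∀ t, t < c → epsStar β t = eps1 β t := by
      intro t ht
      rw [hval, Nat.mod_eq_of_lt (by omega), if_neg (by omega)]
    rcases Nat.eq_zero_or_pos r with hr0 | hrpos
    · left
      intro j
      refine hper _ _ ?_
      rw [hkr, hr0, Nat.zero_add]
    · right
      rcases eps1_lex hβ r with hall | ⟨i, hpre, hlt⟩
      · exfalso
        have h1 := hall c
        have h2 : eps1 β (r + c) = 0 := hctail _ (by omega)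
        exact hc0 (h2 ▸ h1.symm)
      · by_cases hic : r + i ≤ c
        · -- use index i
          have hic' : i < c := by omega
          refine ⟨i, fun j hj => ?_, ?_⟩
          · have h1 : epsStar β (k + j) = epsStar β (r + j) := hper _ _ (hkr j)
            rw [h1, hstar_lt _ (by omega), hstar_lt _ (by omega), hpre j hj]
          · have h1 : epsStar β (k + i) = epsStar β (r + i) := hper _ _ (hkr i)
            have h2 : epsStar β (r + i) ≤ eps1 β (r + i) := by
              rw [hval]
              split
              · have : (r + i) % p = c := by assumption
                rw [Nat.mod_eq_of_lt (by omega)] at this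
                rw [this]; omega
              · rw [Nat.mod_eq_of_lt (by omega)]
            rw [h1, hstar_lt _ hic']
            omega
        · -- use index c - r
          have hrc : r ≤ c := by omega
          refine ⟨c - r, fun j hj => ?_, ?_⟩
          · have h1 : epsStar β (k + j) = epsStar β (r + j) := hper _ _ (hkr j)
            rw [h1, hstar_lt _ (by omega), hstar_lt _ (by omega), hpre j (by omega)]
          · have h1 : epsStar β (k + (c - r)) = epsStar β (r + (c - r)) := hper _ _ (hkr _)
            have h2 : r + (c - r) = c := by omega
            have h3 : epsStar β c = eps1 β c - 1 := by
              rw [hval, Nat.mod_eq_of_lt (by omega), if_pos rfl]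
            have h4 : eps1 β (r + (c - r)) = eps1 β (c - r) := hpre _ (by omega)
            rw [h1, h2, h3, hstar_lt _ (by omega), ← h4, h2]
            omega
  · -- greedy case
    rcases eps1_lex hβ k with hall | ⟨i, hpre, hlt⟩
    · exact Or.inl fun j => by rw [hval, hval]; exact hall j
    · exact Or.inr ⟨i, fun j hj => by rw [hval, hval]; exact hpre j hj,
        by rw [hval, hval]; exact hlt⟩
end Star

noncomputable section Vsec

/-- Tail values of the expansion of 1 in base γ. -/
def Vfun (γ : ℝ) (N : ℕ) (d : ℕ → ℤ) (k : ℕ) : ℝ :=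
  ∑ j ∈ Finset.range (N - k), (d (k+j) : ℝ) / γ ^ (j+1)

variable {γ : ℝ} {N : ℕ} {d : ℕ → ℤ}

lemma Vfun_nonneg (hγ1 : 1 < γ) (hd0 : ∀ j, 0 ≤ d j) (k : ℕ) : 0 ≤ Vfun γ N d k := by
  apply Finset.sum_nonneg
  intro j _
  exact div_nonneg (Int.cast_nonneg (hd0 _)) (pow_nonneg (by linarith) _)

lemma Vfun_le_one (hγ1 : 1 < γ) (hd0 : ∀ j, 0 ≤ d j)
    (hsum : ∑ j ∈ Finset.range N, (d j : ℝ) / γ ^ (j+1) = 1)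
    (hlex : ∀ k, (∀ j, d (k+j) = d j) ∨
      ∃ i, (∀ j, j < i → d (k+j) = d j) ∧ d (k+i) < d i) :
    ∀ k, Vfun γ N d k ≤ 1 := by
  have hγ0 : (0:ℝ) < γ := by linarith
  have hterm : ∀ (m j : ℕ), (0:ℝ) ≤ (d m : ℝ) / γ ^ (j+1) :=
    fun m j => div_nonneg (Int.cast_nonneg (hd0 _)) (pow_nonneg (by linarith) _)
  have hP : ∀ t, t ≤ N → ∑ j ∈ Finset.range t, (d j : ℝ) / γ ^ (j+1) ≤ 1 := by
    intro t ht
    rw [← hsum]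
    exact Finset.sum_le_sum_of_subset_of_nonneg (Finset.range_subset_range.mpr ht)
      (fun j _ _ => hterm j j)
  have main : ∀ t : ℕ, ∀ k, N - k ≤ t → Vfun γ N d k ≤ 1 := by
    intro t
    induction t with
    | zero =>
      intro k hk
      rw [Vfun, Nat.le_zero.mp hk]
      simp
    | succ t ih =>
      intro k hk
      by_cases hkN : N ≤ k
      · rw [Vfun, Nat.sub_eq_zero_of_le hkN]; simp
      push_neg at hkN
      have hcongr : (∀ j, j < N - k → d (k+j) = d j) → Vfun γ N d k ≤ 1 := by
        intro hpre
        rw [Vfun, Finset.sum_congr rfl (fun j hj => by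
          rw [hpre j (Finset.mem_range.mp hj)])]
        exact hP _ (Nat.sub_le _ _)
      rcases hlex k with hall | ⟨i, hpre, hlt⟩
      · exact hcongr (fun j _ => hall j)
      by_cases hiN : N - k ≤ i
      · exact hcongr (fun j hj => hpre j (lt_of_lt_of_le hj hiN))
      push_neg at hiN
      -- split the sum at i+1
      have hsplit : Vfun γ N d k =
          (∑ j ∈ Finset.range (i+1), (d (k+j) : ℝ) / γ ^ (j+1)) +
          (∑ j ∈ Finset.Ico (i+1) (N-k), (d (k+j) : ℝ) / γ ^ (j+1)) := by
        rw [Vfun, ← Finset.sum_range_add_sum_Ico _ (by omega : i+1 ≤ N-k)]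
      have htail : (∑ j ∈ Finset.Ico (i+1) (N-k), (d (k+j) : ℝ) / γ ^ (j+1)) =
          (γ ^ (i+1))⁻¹ * Vfun γ N d (k+i+1) := by
        rw [Finset.sum_Ico_eq_sum_range, Vfun, Finset.mul_sum]
        have hNN : N - k - (i+1) = N - (k+i+1) := by omega
        rw [hNN]
        apply Finset.sum_congr rfl
        intro j _
        rw [show k + (i + 1 + j) = k + i + 1 + j by ring,
          show i + 1 + j + 1 = (i+1) + (j+1) by ring, pow_add]
        field_simp
      have htail_le : (∑ j ∈ Finset.Ico (i+1) (N-k), (d (k+j) : ℝ) / γ ^ (j+1)) ≤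
          (γ ^ (i+1))⁻¹ := by
        rw [htail]
        have h1 : Vfun γ N d (k+i+1) ≤ 1 := ih (k+i+1) (by omega)
        have h2 : (0:ℝ) ≤ (γ ^ (i+1))⁻¹ := by positivity
        nlinarith
      have hhead : (∑ j ∈ Finset.range (i+1), (d (k+j) : ℝ) / γ ^ (j+1)) ≤
          (∑ j ∈ Finset.range i, (d j : ℝ) / γ ^ (j+1)) + ((d i : ℝ) - 1) / γ ^ (i+1) := by
        rw [Finset.sum_range_succ, Finset.sum_congr rfl (fun j hj => by
          rw [hpre j (Finset.mem_range.mp hj)])]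
        have hcast : (d (k+i) : ℝ) ≤ (d i : ℝ) - 1 := by
          have h' : d (k+i) ≤ d i - 1 := by omega
          calc (d (k+i) : ℝ) ≤ ((d i - 1 : ℤ) : ℝ) := by exact_mod_cast h'
            _ = (d i : ℝ) - 1 := by push_cast; ring
        exact add_le_add (le_refl _) ((div_le_div_iff_of_pos_right (by positivity)).mpr hcast)
      have hfin : (∑ j ∈ Finset.range i, (d j : ℝ) / γ ^ (j+1)) + ((d i : ℝ) - 1) / γ ^ (i+1)
          + (γ ^ (i+1))⁻¹ = ∑ j ∈ Finset.range (i+1), (d j : ℝ) / γ ^ (j+1) := by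
        rw [Finset.sum_range_succ]
        field_simp
        ring
      calc Vfun γ N d k ≤ (∑ j ∈ Finset.range i, (d j : ℝ) / γ ^ (j+1))
            + ((d i : ℝ) - 1) / γ ^ (i+1) + (γ ^ (i+1))⁻¹ := by
            rw [hsplit]; exact add_le_add hhead htail_le
        _ = ∑ j ∈ Finset.range (i+1), (d j : ℝ) / γ ^ (j+1) := hfin
        _ ≤ 1 := hP _ (by omega)
  exact fun k => main (N - k) k le_rfl

end Vsec

noncomputable section KeySec
variable {γ : ℝ} {N : ℕ} {d : ℕ → ℤ}

/-- digits of the periodic expansion of 1 in base γ. -/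
def Efun (N : ℕ) (d : ℕ → ℤ) (k : ℕ) : ℤ := if k = N-1 then d (N-1) - 1 else d k

def nxtk (N k : ℕ) : ℕ := if k = N-1 then 0 else k+1

lemma nxtk_lt (hN : 1 ≤ N) {k : ℕ} (hk : k < N) : nxtk N k < N := by
  unfold nxtk; split <;> omega

lemma Vfun_zero (hsum : ∑ j ∈ Finset.range N, (d j : ℝ) / γ ^ (j+1) = 1) :
    Vfun γ N d 0 = 1 := by
  rw [Vfun, Nat.sub_zero, ← hsum]
  exact Finset.sum_congr rfl (fun j _ => by rw [Nat.zero_add])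

lemma Vfun_rec (hγ1 : 1 < γ) (hN : 1 ≤ N)
    (hsum : ∑ j ∈ Finset.range N, (d j : ℝ) / γ ^ (j+1) = 1)
    {k : ℕ} (hk : k < N) :
    γ * Vfun γ N d k = (Efun N d k : ℝ) + Vfun γ N d (nxtk N k) := by
  have hγne : γ ≠ 0 := by linarith
  by_cases hkN : k = N - 1
  · subst hkN
    have h1 : N - (N-1) = 1 := by omega
    rw [Vfun, h1, Efun, if_pos rfl, nxtk, if_pos rfl, Vfun_zero hsum]
    simp only [Finset.range_one, Finset.sum_singleton, Nat.add_zero]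
    push_cast
    field_simp
    ring
  · have h1 : N - k = (N - (k+1)) + 1 := by omega
    rw [Vfun, h1, Finset.sum_range_succ', Efun, if_neg hkN, nxtk, if_neg hkN, Vfun]
    rw [mul_add, Finset.mul_sum]
    have ht : ∀ i ∈ Finset.range (N-(k+1)),
        γ * ((d (k+(i+1)) : ℝ) / γ ^ (i+1+1)) = (d (k+1+i) : ℝ) / γ ^ (i+1) := by
      intro i _
      rw [show k+(i+1) = k+1+i by ring, show i+1+1 = (i+1)+1 by rfl, pow_succ]
      field_simp
    rw [Finset.sum_congr rfl ht]
    have hd : γ * ((d (k+0) : ℝ) / γ ^ (0+1)) = (d k : ℝ) := by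
      simp only [Nat.add_zero, Nat.zero_add, pow_one]
      field_simp
    rw [hd, add_comm]

lemma Efun_nonneg (hd0 : ∀ j, 0 ≤ d j) (hdN : 1 ≤ d (N-1)) (k : ℕ) :
    0 ≤ Efun N d k := by
  unfold Efun; split
  · omega
  · exact hd0 _

lemma Vfun_ge (hγ1 : 1 < γ) (hd0 : ∀ j, 0 ≤ d j) (hdN : 1 ≤ d (N-1))
    {k : ℕ} (hk : k < N) : (γ ^ N)⁻¹ ≤ Vfun γ N d k := by
  have hγ0 : (0:ℝ) < γ := by linarith
  have hmem : N - k - 1 ∈ Finset.range (N - k) := Finset.mem_range.mpr (by omega)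
  have hsingle : (d (k + (N-k-1)) : ℝ) / γ ^ ((N-k-1)+1) ≤ Vfun γ N d k := by
    apply Finset.single_le_sum (f := fun j => (d (k+j) : ℝ) / γ ^ (j+1)) _ hmem
    intro j _
    exact div_nonneg (Int.cast_nonneg (hd0 _)) (by positivity)
  refine le_trans ?_ hsingle
  rw [show k + (N-k-1) = N-1 by omega, show (N-k-1)+1 = N-k by omega]
  have h1 : (1:ℝ) ≤ (d (N-1) : ℝ) := by exact_mod_cast hdN
  have h2 : γ ^ (N-k) ≤ γ ^ N := pow_le_pow_right₀ (by linarith) (by omega)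
  calc (γ ^ N)⁻¹ ≤ (γ ^ (N-k))⁻¹ := by
        apply inv_anti₀ (by positivity) h2
    _ = 1 / γ ^ (N-k) := (one_div _).symm
    _ ≤ (d (N-1) : ℝ) / γ ^ (N-k) := by gcongr

/-- Key lemma: the value of any admissible prefix is at least `γ^{-(m+N)}` below `V k`. -/
lemma keyLemma (hγ1 : 1 < γ) (hN : 1 ≤ N) (hd0 : ∀ j, 0 ≤ d j) (hdN : 1 ≤ d (N-1))
    (hsum : ∑ j ∈ Finset.range N, (d j : ℝ) / γ ^ (j+1) = 1)
    (hVle : ∀ k, Vfun γ N d k ≤ 1) :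
    ∀ m : ℕ, ∀ k, k < N → ∀ x : ℝ, 0 ≤ x → x < Vfun γ N d k →
      x - (bT γ)^[m] x / γ ^ m ≤ Vfun γ N d k - (γ ^ (m+N))⁻¹ := by
  have hγ0 : (0:ℝ) < γ := by linarith
  have hγne : γ ≠ 0 := by linarith
  intro m
  induction m with
  | zero =>
    intro k hk x hx0 hxV
    simp only [Function.iterate_zero, id_eq, pow_zero, div_one, sub_self, Nat.zero_add]
    have := Vfun_ge hγ1 hd0 hdN hk
    linarith
  | succ m ih =>
    intro k hk x hx0 hxV
    set x' := bT γ x with hx'def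
    have hx' : x' = γ * x - (⌊γ * x⌋ : ℝ) := bT_eq γ x
    have hx'mem : x' ∈ Set.Ico (0:ℝ) 1 := bT_mem γ x
    set w : ℤ := ⌊γ * x⌋ with hwdef
    set A := (bT γ)^[m] x' with hAdef
    have hiter : (bT γ)^[m+1] x = A := Function.iterate_succ_apply (bT γ) m x ▸ rfl
    set E := Efun N d k with hEdef
    set k' := nxtk N k with hk'def
    have hrec : γ * Vfun γ N d k = (E : ℝ) + Vfun γ N d k' := Vfun_rec hγ1 hN hsum hk
    have hk'N : k' < N := nxtk_lt hN hk
    have hV'0 : 0 ≤ Vfun γ N d k' := Vfun_nonneg hγ1 hd0 k'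
    have hV'1 : Vfun γ N d k' ≤ 1 := hVle k'
    have hγVk : γ * x < γ * Vfun γ N d k := by
      exact mul_lt_mul_of_pos_left hxV hγ0
    rw [hiter]
    refine le_of_mul_le_mul_left ?_ hγ0
    have e1 : γ * (x - A / γ ^ (m+1)) = γ * x - A / γ ^ m := by
      rw [pow_succ]
      field_simp
    have e2 : γ * (Vfun γ N d k - (γ ^ (m+1+N))⁻¹) = γ * Vfun γ N d k - (γ ^ (m+N))⁻¹ := by
      rw [show m+1+N = (m+N)+1 by omega, pow_succ]
      field_simp
    rw [e1, e2]
    by_cases hw : w < E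
    · -- digit smaller than expansion digit: tail is free, compare with V 0 = 1
      have hIH := ih 0 (by omega) x' hx'mem.1 (by rw [Vfun_zero hsum]; exact hx'mem.2)
      rw [Vfun_zero hsum] at hIH
      have hwE : (w : ℝ) ≤ (E : ℝ) - 1 := by
        have : w ≤ E - 1 := by omega
        calc (w:ℝ) ≤ ((E - 1 : ℤ) : ℝ) := by exact_mod_cast this
          _ = (E:ℝ) - 1 := by push_cast; ring
      linarith
    · push_neg at hw
      -- w ≥ E; show w = E
      have hwE : w = E := by
        by_contra hne
        have hw1 : (E:ℝ) + 1 ≤ (w:ℝ) := by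
          have : E + 1 ≤ w := by omega
          exact_mod_cast this
        -- then x' < V k' - 1 ≤ 0, contradiction
        linarith [hx'mem.1]
      have hIH := ih k' hk'N x' hx'mem.1 (by linarith [hwE ▸ hx'])
      rw [hwE] at hx'
      linarith
end KeySec

noncomputable section ExpandSec
variable {γ : ℝ}

lemma expand (hγ : γ ≠ 0) (y : ℝ) :
    ∀ j : ℕ, y = (∑ i ∈ Finset.range j, (dig γ y i : ℝ) / γ ^ (i+1)) + (bT γ)^[j] y / γ ^ j := by
  intro j
  induction j with
  | zero => simp
  | succ j ih =>
    rw [Finset.sum_range_succ]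
    have h1 : (bT γ)^[j+1] y = γ * (bT γ)^[j] y - dig γ y j := iter_succ' γ y j
    have h2 : (bT γ)^[j] y / γ ^ j =
        (dig γ y j : ℝ) / γ ^ (j+1) + (bT γ)^[j+1] y / γ ^ (j+1) := by
      rw [h1, pow_succ]
      field_simp
      ring
    calc y = (∑ i ∈ Finset.range j, (dig γ y i : ℝ) / γ ^ (i+1)) + (bT γ)^[j] y / γ ^ j := ih
      _ = _ := by rw [h2]; ring

end ExpandSec

theorem stmt10 (β γ : ℝ) (hβ : 1 < β) (hγ1 : 1 < γ) (hγβ : γ < β)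
    (N : ℕ) (hN : 1 ≤ N) (hNdig : 1 ≤ epsStar β (N - 1))
    (hsol : 1 = ∑ j ∈ Finset.range N, (epsStar β j : ℝ) / γ ^ (j + 1))
    (u v : List ℤ) (hu : Adm γ u) (hv : Adm γ v) :
    Adm γ (u ++ List.replicate N 0 ++ v) := by
  obtain ⟨a, ha, hua⟩ := hu
  obtain ⟨b, hb, hvb⟩ := hv
  have hγ0 : (0:ℝ) < γ := by linarith
  have hγne : γ ≠ 0 := by linarith
  set n := u.length with hn
  set mm := v.length with hmm
  set d : ℕ → ℤ := epsStar β with hd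
  have hsum : ∑ j ∈ Finset.range N, (d j : ℝ) / γ ^ (j+1) = 1 := hsol.symm
  have hd0 : ∀ j, 0 ≤ d j := epsStar_nonneg hβ
  have hdN : 1 ≤ d (N-1) := hNdig
  have hlex := epsStar_lex hβ
  have hVle : ∀ k, Vfun γ N d k ≤ 1 := Vfun_le_one hγ1 hd0 hsum hlex
  have key0 : ∀ (m : ℕ) (y : ℝ), y ∈ Set.Ico (0:ℝ) 1 →
      y - (bT γ)^[m] y / γ ^ m ≤ 1 - (γ ^ (m+N))⁻¹ := by
    intro m y hy
    have h := keyLemma hγ1 hN hd0 hdN hsum hVle m 0 (by omega) y hy.1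
      (by rw [Vfun_zero hsum]; exact hy.2)
    rw [Vfun_zero hsum] at h
    exact h
  set S : ℕ → ℝ := fun j => ∑ i ∈ Finset.range j, (dig γ a i : ℝ) / γ ^ (i+1) with hS
  set x : ℝ := S n + b / γ ^ (n+N) with hx
  have hterm : ∀ i : ℕ, (0:ℝ) ≤ (dig γ a i : ℝ) / γ ^ (i+1) := fun i =>
    div_nonneg (Int.cast_nonneg (dig_nonneg (le_of_lt hγ0) ha i)) (by positivity)
  have hSmono : ∀ j, j ≤ n → S j ≤ S n := by
    intro j hj
    exact Finset.sum_le_sum_of_subset_of_nonneg (Finset.range_subset_range.mpr hj)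
      (fun i _ _ => hterm i)
  have hSbound : ∀ j, j ≤ n → γ ^ j * (S n - S j) ≤ 1 - (γ ^ ((n-j)+N))⁻¹ := by
    intro j hj
    have e1 : a = S j + (bT γ)^[j] a / γ ^ j := expand hγne a j
    have e2 : a = S n + (bT γ)^[n] a / γ ^ n := expand hγne a n
    have hT : (bT γ)^[n-j] ((bT γ)^[j] a) = (bT γ)^[n] a := by
      rw [← Function.iterate_add_apply, Nat.sub_add_cancel hj]
    have hk := key0 (n-j) ((bT γ)^[j] a) (iter_mem ha j)
    rw [hT] at hk
    have e3 : γ ^ j * (S n - S j) = (bT γ)^[j] a - (bT γ)^[n] a / γ ^ (n-j) := by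
      have h4 : S n - S j = (bT γ)^[j] a / γ ^ j - (bT γ)^[n] a / γ ^ n := by
        linarith
      rw [h4, show γ ^ n = γ ^ (n-j) * γ ^ j by rw [← pow_add]; congr 1; omega]
      field_simp
    rw [e3]
    exact hk
  have hxSj : ∀ j, j ≤ n → γ ^ j * (x - S j) ∈ Set.Ico (0:ℝ) 1 := by
    intro j hj
    have hbn : (0:ℝ) ≤ b / γ ^ (n+N) := div_nonneg hb.1 (by positivity)
    constructor
    · apply mul_nonneg (by positivity)
      have := hSmono j hj
      rw [hx]
      linarith
    · have h1 := hSbound j hj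
      have h2 : γ ^ j * (b / γ ^ (n+N)) < (γ ^ ((n-j)+N))⁻¹ := by
        have e6 : γ ^ j * (b / γ ^ (n+N)) = b / γ ^ ((n-j)+N) := by
          rw [show γ ^ (n+N) = γ ^ ((n-j)+N) * γ ^ j by rw [← pow_add]; congr 1; omega]
          field_simp
        rw [e6, ← one_div]
        gcongr
        exact hb.2
      have e : γ ^ j * (x - S j) = γ ^ j * (S n - S j) + γ ^ j * (b / γ ^ (n+N)) := by
        rw [hx]; ring
      rw [e]
      linarith
  have hstep : ∀ j : ℕ, γ * (γ ^ j * (x - S j)) = (dig γ a j : ℝ) + γ ^ (j+1) * (x - S (j+1)) := by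
    intro j
    have hSsucc : S (j+1) = S j + (dig γ a j : ℝ) / γ ^ (j+1) := Finset.sum_range_succ _ _
    rw [hSsucc, pow_succ]
    field_simp
    ring
  have hG : ∀ j, j ≤ n → (bT γ)^[j] x = γ ^ j * (x - S j) := by
    intro j
    induction j with
    | zero =>
      intro _
      simp [hS]
    | succ j ih =>
      intro hj
      have hj' : j ≤ n := by omega
      rw [Function.iterate_succ_apply', bT_eq, ih hj', hstep j,
        Int.floor_intCast_add, Int.floor_eq_zero_iff.mpr (hxSj (j+1) hj)]
      push_cast
      ring
  have hdigu : ∀ j, j < n → dig γ x j = dig γ a j := by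
    intro j hj
    show ⌊γ * (bT γ)^[j] x⌋ = dig γ a j
    rw [hG j (le_of_lt hj), hstep j, Int.floor_intCast_add,
      Int.floor_eq_zero_iff.mpr (hxSj (j+1) hj)]
    omega
  have hTn : (bT γ)^[n] x = b / γ ^ N := by
    rw [hG n le_rfl, hx, show γ ^ (n+N) = γ ^ N * γ ^ n by rw [← pow_add]; congr 1; omega]
    field_simp
    ring
  have hfrac : ∀ k, k < N → γ * (b / γ ^ (N-k)) = b / γ ^ (N-(k+1)) ∧
      b / γ ^ (N-(k+1)) ∈ Set.Ico (0:ℝ) 1 := by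
    intro k hk
    refine ⟨?_, ?_, ?_⟩
    · rw [show N - k = (N-(k+1))+1 by omega, pow_succ]
      field_simp
    · exact div_nonneg hb.1 (by positivity)
    · rw [div_lt_one (by positivity)]
      calc b < 1 := hb.2
        _ ≤ γ ^ (N-(k+1)) := one_le_pow₀ (le_of_lt hγ1)
  have hzero : ∀ k, k ≤ N → (bT γ)^[n+k] x = b / γ ^ (N-k) := by
    intro k
    induction k with
    | zero => intro _; rw [Nat.add_zero, hTn, Nat.sub_zero]
    | succ k ih =>
      intro hk
      have hk' : k < N := by omega
      rw [show n + (k+1) = (n+k)+1 by omega, Function.iterate_succ_apply', ih (by omega)]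
      show Int.fract (γ * (b / γ ^ (N-k))) = b / γ ^ (N-(k+1))
      rw [(hfrac k hk').1, Int.fract_eq_self.mpr ⟨(hfrac k hk').2.1, (hfrac k hk').2.2⟩]
  have hdigz : ∀ k, k < N → dig γ x (n+k) = 0 := by
    intro k hk
    show ⌊γ * (bT γ)^[n+k] x⌋ = 0
    rw [hzero k (le_of_lt hk), (hfrac k hk).1]
    exact Int.floor_eq_zero_iff.mpr (hfrac k hk).2
  have hTnN : (bT γ)^[n+N] x = b := by
    have := hzero N le_rfl
    simpa using this
  have hdigv : ∀ i : ℕ, dig γ x (n+N+i) = dig γ b i := by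
    intro i
    rw [dig_shift γ x (n+N) i, hTnN]
  have hxmem : x ∈ Set.Ico (0:ℝ) 1 := by
    have h := hxSj 0 (Nat.zero_le n)
    simpa [hS] using h
  refine ⟨x, hxmem, ?_⟩
  intro i
  have hiv : (i : ℕ) < n + N + mm := by
    have h := i.isLt
    simp only [List.length_append, List.length_replicate] at h
    omega
  rcases lt_or_ge (i : ℕ) n with h1 | h1
  · have hget : (u ++ List.replicate N 0 ++ v).get i = u.get ⟨i, h1⟩ := by
      rw [List.get_eq_getElem, List.get_eq_getElem]
      rw [List.getElem_append_left (by simp; omega), List.getElem_append_left h1]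
    rw [hget, hdigu _ h1]
    exact hua ⟨i, h1⟩
  · rcases lt_or_ge (i : ℕ) (n + N) with h2 | h2
    · have hk : (i : ℕ) - n < N := by omega
      have hget : (u ++ List.replicate N 0 ++ v).get i = 0 := by
        rw [List.get_eq_getElem]
        rw [List.getElem_append_left (by simp; omega)]
        rw [List.getElem_append_right (by omega)]
        exact List.getElem_replicate _
      rw [hget, show ((i : ℕ)) = n + ((i : ℕ) - n) by omega]
      exact hdigz _ hk
    · have hi' : (i : ℕ) - (n + N) < mm := by omega
      have hget : (u ++ List.replicate N 0 ++ v).get i = v.get ⟨(i : ℕ) - (n + N), hi'⟩ := by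
        rw [List.get_eq_getElem, List.get_eq_getElem]
        rw [List.getElem_append_right (by simp; omega)]
        simp
        rfl
      have hdv := hdigv ((i : ℕ) - (n + N))
      rw [show n + N + ((i : ℕ) - (n + N)) = (i : ℕ) by omega] at hdv
      rw [hget, hdv]
      exact hvb ⟨(i : ℕ) - (n + N), hi'⟩
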